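/- arXiv:1008.3310 — 2 statements merged into one kernel-verified Lean document; each statement's English description precedes it below -/
import Mathlib

section
/- Let P be a finite partially ordered set with n ≥ 1 elements and let w : P → ℝ be an injective weight function. Let σ : {1,…,n} → P be a uniformly random bijection (so σ(1),…,σ(n) is the order in which the elements arrive), and for each k let A_k be the event that σ(k) is the greedy maximum, with respect to w, of the induced partial order on {σ(1),…,σ(k)}. Then Pr(A_k) = 1/k for every k ∈ {1,…,n}, and the events A₁,…,A_n are mutually independent. -/
open MeasureTheory Finset Function
open scoped Classical ENNReal

/-- The element of the finset `s` with minimum weight. -/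
noncomputable def argminOn {α : Type*} (w : α → ℝ) (s : Finset α) (h : s.Nonempty) : α :=
  (s.exists_min_image w h).choose

/-- One step of the greedy chain: if `x` is not maximal, move to the element of
minimum weight among those strictly above `x`; otherwise stay at `x`. -/
noncomputable def greedyStep {α : Type*} [PartialOrder α] [Fintype α] (w : α → ℝ) (x : α) : α :=
  if h : (Finset.univ.filter fun y => x < y).Nonempty then argminOn w _ h else x

/-- The greedy maximum of a finite nonempty partially ordered set with weights `w`:
start at the element of minimum weight and iterate `greedyStep` until stabilization
(`Fintype.card α` iterations suffice). -/
noncomputable def greedyMax {α : Type*} [PartialOrder α] [Fintype α] [Nonempty α]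
    (w : α → ℝ) : α :=
  (greedyStep w)^[Fintype.card α] (argminOn w Finset.univ Finset.univ_nonempty)

/-- `x` belongs to `s` and is the greedy maximum of the partial order induced on `s`,
with the weights `w` restricted to `s`. -/
def IsGreedyMaxOn {α : Type*} [PartialOrder α] [Fintype α]
    (w : α → ℝ) (s : Set α) (x : α) : Prop :=
  ∃ hx : x ∈ s,
    haveI : Nonempty s := ⟨⟨x, hx⟩⟩
    greedyMax (fun y : s => w y.1) = ⟨x, hx⟩

/-- `x` is *tagged*: it is the greedy maximum (w.r.t. the weights `w`) of the induced
partial order on the set of elements arriving no later than `x`. -/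
def Tagged {α : Type*} [PartialOrder α] [Fintype α] (T w : α → ℝ) (x : α) : Prop :=
  IsGreedyMaxOn w {y | T y ≤ T x} x

/-- The strategy accepts `x`: `x` is tagged, arrives after time `1/e`, and no other
element is tagged with arrival time in `(1/e, T x)`. -/
def Accepts {α : Type*} [PartialOrder α] [Fintype α] (T w : α → ℝ) (x : α) : Prop :=
  Tagged T w x ∧ 1 / Real.exp 1 < T x ∧
    ∀ y, Tagged T w y → 1 / Real.exp 1 < T y → T x ≤ T y

/-- The probability that `x` is the greedy maximum of `P` when the weights are
independent and uniform on `[0,1]`. -/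
noncomputable def muGreedy (P : Type) [Fintype P] [PartialOrder P] (x : P) : ℝ≥0∞ :=
  (Measure.pi fun _ : P => volume.restrict (Set.Icc (0:ℝ) 1)) {w | IsGreedyMaxOn w Set.univ x}

/-- The conditional probability that `x` is the greedy maximum of `P`, given `W x ≤ t`,
when the weights are independent and uniform on `[0,1]`. -/
noncomputable def muGreedyCond (P : Type) [Fintype P] [PartialOrder P] (t : ℝ) (x : P) : ℝ≥0∞ :=
  (Measure.pi fun _ : P => volume.restrict (Set.Icc (0:ℝ) 1))
      {w | IsGreedyMaxOn w Set.univ x ∧ w x ≤ t} /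
    (Measure.pi fun _ : P => volume.restrict (Set.Icc (0:ℝ) 1)) {w | w x ≤ t}

section AuxGM

variable {α : Type*} [PartialOrder α] [Fintype α]

lemma exists_isGreedyMaxOn (w : α → ℝ) {s : Set α} (hs : s.Nonempty) :
    ∃ x, IsGreedyMaxOn w s x := by
  obtain ⟨x, hx⟩ := hs
  haveI : Nonempty s := ⟨⟨x, hx⟩⟩
  exact ⟨(greedyMax (fun y : s => w y.1)).1, (greedyMax (fun y : s => w y.1)).2, rfl⟩

lemma isGreedyMaxOn_unique (w : α → ℝ) {s : Set α} {x y : α}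
    (hx : IsGreedyMaxOn w s x) (hy : IsGreedyMaxOn w s y) : x = y := by
  obtain ⟨hx1, hx2⟩ := hx
  obtain ⟨hy1, hy2⟩ := hy
  exact congrArg Subtype.val (hx2.symm.trans hy2)

noncomputable def gmOf [Nonempty α] (w : α → ℝ) (s : Set α) : α :=
  Classical.epsilon (IsGreedyMaxOn w s)

lemma gmOf_spec [Nonempty α] (w : α → ℝ) {s : Set α} (hs : s.Nonempty) :
    IsGreedyMaxOn w s (gmOf w s) :=
  Classical.epsilon_spec (exists_isGreedyMaxOn w hs)

lemma gmOf_mem [Nonempty α] (w : α → ℝ) {s : Set α} (hs : s.Nonempty) : gmOf w s ∈ s :=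
  (gmOf_spec w hs).1

lemma isGreedyMaxOn_iff [Nonempty α] (w : α → ℝ) {s : Set α} (hs : s.Nonempty) {x : α} :
    IsGreedyMaxOn w s x ↔ x = gmOf w s :=
  ⟨fun h => isGreedyMaxOn_unique w h (gmOf_spec w hs), fun h => h ▸ gmOf_spec w hs⟩

end AuxGM
section AuxCount

variable {P : Type} [Fintype P] [PartialOrder P] [Nonempty P] {n : ℕ}

/-- The set of values of `σ` at indices `≤ k`. -/
def TsetGM (σ : Fin n ≃ P) (k : Fin n) : Set P := {y | ∃ j : Fin n, j ≤ k ∧ σ j = y}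

lemma TsetGM_nonempty (σ : Fin n ≃ P) (k : Fin n) : (TsetGM σ k).Nonempty :=
  ⟨σ k, k, le_rfl, rfl⟩

lemma swap_le_of_le {a m k j : Fin n} (ha : a ≤ k) (hm : m ≤ k) (hj : j ≤ k) :
    Equiv.swap a m j ≤ k := by
  rcases eq_or_ne j a with rfl | h1
  · simpa [Equiv.swap_apply_left] using hm
  rcases eq_or_ne j m with rfl | h2
  · simpa [Equiv.swap_apply_right] using ha
  · rwa [Equiv.swap_apply_of_ne_of_ne h1 h2]

lemma TsetGM_swap (σ : Fin n ≃ P) {a m k : Fin n} (ha : a ≤ k) (hm : m ≤ k) :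
    TsetGM ((Equiv.swap a m).trans σ) k = TsetGM σ k := by
  ext y
  constructor
  · rintro ⟨j, hj, rfl⟩
    exact ⟨Equiv.swap a m j, swap_le_of_le ha hm hj, rfl⟩
  · rintro ⟨j, hj, rfl⟩
    refine ⟨Equiv.swap a m j, swap_le_of_le ha hm hj, ?_⟩
    simp [Equiv.trans_apply, Equiv.swap_apply_self]

lemma key_count (w : P → ℝ) (m : Fin n) (F : Finset (Fin n ≃ P))
    (hF : ∀ a : Fin n, a ≤ m → ∀ σ ∈ F, (Equiv.swap a m).trans σ ∈ F) :
    F.card = ((m : ℕ) + 1) * (F.filter fun σ => σ m = gmOf w (TsetGM σ m)).card := by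
  set g : (Fin n ≃ P) → Fin n := fun σ => σ.symm (gmOf w (TsetGM σ m)) with hg
  have hgle : ∀ σ : Fin n ≃ P, g σ ≤ m := by
    intro σ
    obtain ⟨j, hj, e⟩ := gmOf_mem w (TsetGM_nonempty σ m)
    have hgj : g σ = j := by rw [hg]; simp only []; rw [← e, Equiv.symm_apply_apply]
    rwa [hgj]
  have hsum := Finset.card_eq_sum_card_fiberwise
    (f := g) (s := F) (t := Finset.Iic m) (fun σ _ => Finset.mem_Iic.mpr (hgle σ))
  have hfib : ∀ j ∈ Finset.Iic m,
      (F.filter fun σ => g σ = j).card = (F.filter fun σ => g σ = m).card := by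
    intro j hj
    have hjm : j ≤ m := Finset.mem_Iic.mp hj
    refine Finset.card_bij' (fun σ _ => (Equiv.swap j m).trans σ)
      (fun σ _ => (Equiv.swap j m).trans σ) ?_ ?_ ?_ ?_
    · intro σ hσ
      rw [Finset.mem_filter] at hσ ⊢
      obtain ⟨hσF, hσg⟩ := hσ
      refine ⟨hF j hjm σ hσF, ?_⟩
      show ((Equiv.swap j m).trans σ).symm
        (gmOf w (TsetGM ((Equiv.swap j m).trans σ) m)) = m
      rw [TsetGM_swap σ hjm le_rfl, Equiv.symm_trans_apply, Equiv.symm_swap]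
      have hj' : σ.symm (gmOf w (TsetGM σ m)) = j := hσg
      rw [hj', Equiv.swap_apply_left]
    · intro σ hσ
      rw [Finset.mem_filter] at hσ ⊢
      obtain ⟨hσF, hσg⟩ := hσ
      refine ⟨hF j hjm σ hσF, ?_⟩
      show ((Equiv.swap j m).trans σ).symm
        (gmOf w (TsetGM ((Equiv.swap j m).trans σ) m)) = j
      rw [TsetGM_swap σ hjm le_rfl, Equiv.symm_trans_apply, Equiv.symm_swap]
      have hm' : σ.symm (gmOf w (TsetGM σ m)) = m := hσg
      rw [hm', Equiv.swap_apply_right]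
    · intro σ _
      ext x
      simp [Equiv.trans_apply, Equiv.swap_apply_self]
    · intro σ _
      ext x
      simp [Equiv.trans_apply, Equiv.swap_apply_self]
  rw [Finset.sum_congr rfl hfib, Finset.sum_const, Fin.card_Iic, smul_eq_mul] at hsum
  rw [hsum]
  congr 1
  refine congrArg Finset.card (Finset.filter_congr fun σ _ => ?_)
  rw [hg]
  simp only []
  rw [Equiv.symm_apply_eq]
  exact eq_comm

lemma main_count (w : P → ℝ) (S : Finset (Fin n)) :
    (Finset.univ.filter fun σ : Fin n ≃ P => ∀ k ∈ S, σ k = gmOf w (TsetGM σ k)).card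
      * ∏ k ∈ S, ((k : ℕ) + 1) = Fintype.card (Fin n ≃ P) := by
  induction S using Finset.induction_on_min with
  | empty => simp
  | insert a S ha ih =>
    have haS : a ∉ S := fun h => lt_irrefl a (ha a h)
    set F := Finset.univ.filter
      (fun σ : Fin n ≃ P => ∀ k ∈ S, σ k = gmOf w (TsetGM σ k)) with hFdef
    have hinv : ∀ a' : Fin n, a' ≤ a → ∀ σ ∈ F, (Equiv.swap a' a).trans σ ∈ F := by
      intro a' ha' σ hσ
      rw [hFdef, Finset.mem_filter] at hσ ⊢
      refine ⟨Finset.mem_univ _, fun k hk => ?_⟩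
      have hak : a < k := ha k hk
      have h1 : ((Equiv.swap a' a).trans σ) k = σ k := by
        rw [Equiv.trans_apply,
          Equiv.swap_apply_of_ne_of_ne (lt_of_le_of_lt ha' hak).ne' hak.ne']
      rw [h1, TsetGM_swap σ (le_of_lt (lt_of_le_of_lt ha' hak)) hak.le]
      exact hσ.2 k hk
    have hkey := key_count w a F hinv
    have hset : (Finset.univ.filter fun σ : Fin n ≃ P =>
        ∀ k ∈ insert a S, σ k = gmOf w (TsetGM σ k)) =
        F.filter fun σ => σ a = gmOf w (TsetGM σ a) := by
      ext σ
      rw [hFdef]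
      simp only [Finset.mem_filter, Finset.mem_univ, true_and, Finset.mem_insert]
      constructor
      · intro h
        exact ⟨fun k hk => h k (Or.inr hk), h a (Or.inl rfl)⟩
      · rintro ⟨h1, h2⟩ k (rfl | hk)
        exacts [h2, h1 k hk]
    rw [hset, Finset.prod_insert haS]
    calc (F.filter fun σ => σ a = gmOf w (TsetGM σ a)).card
          * (((a : ℕ) + 1) * ∏ k ∈ S, ((k : ℕ) + 1))
        = (((a : ℕ) + 1) * (F.filter fun σ => σ a = gmOf w (TsetGM σ a)).card)
          * ∏ k ∈ S, ((k : ℕ) + 1) := by ring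
      _ = F.card * ∏ k ∈ S, ((k : ℕ) + 1) := by rw [← hkey]
      _ = _ := ih

end AuxCount

lemma ennreal_count_aux {c d N : ℕ} (h : c * d = N) (hN : N ≠ 0) :
    (N : ℝ≥0∞)⁻¹ * c = ((d : ℕ) : ℝ≥0∞)⁻¹ := by
  have hc : c ≠ 0 := by rintro rfl; rw [zero_mul] at h; exact hN h.symm
  subst h
  have h1 : (c : ℝ≥0∞) ≠ 0 := Nat.cast_ne_zero.mpr hc
  have h2 : (c : ℝ≥0∞) ≠ ⊤ := ENNReal.natCast_ne_top c
  rw [Nat.cast_mul, ENNReal.mul_inv (Or.inl h1) (Or.inl h2), mul_comm ((c : ℝ≥0∞))⁻¹,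
    mul_assoc, ENNReal.inv_mul_cancel h1 h2, mul_one]

lemma inv_prod_natCast {β : Type*} (S : Finset β) (f : β → ℕ) (hf : ∀ k ∈ S, f k ≠ 0) :
    ∏ k ∈ S, ((f k : ℝ≥0∞))⁻¹ = ((∏ k ∈ S, f k : ℕ) : ℝ≥0∞)⁻¹ := by
  classical
  induction S using Finset.induction_on with
  | empty => simp
  | @insert a s haS ih =>
    rw [Finset.prod_insert haS, Finset.prod_insert haS,
      ih (fun k hk => hf k (Finset.mem_insert_of_mem hk)), Nat.cast_mul,
      ENNReal.mul_inv (Or.inl (Nat.cast_ne_zero.mpr (hf a (Finset.mem_insert_self a s))))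
        (Or.inl (ENNReal.natCast_ne_top _))]
/-- If the elements of an `n`-element poset arrive in uniformly random
order, and `A k` is the event that the `k`-th arrival is the greedy maximum of the induced
partial order on the first `k` arrivals, then `Pr(A k) = 1/k` and the events `A 1, …, A n`
are mutually independent. -/
theorem greedy_tag_events_independent (P : Type) [Fintype P] [PartialOrder P]
    {n : ℕ} (hn : 1 ≤ n) (hcard : Fintype.card P = n)
    (w : P → ℝ) (hw : Function.Injective w) :
    let μ : @Measure (Fin n ≃ P) ⊤ :=
      (Fintype.card (Fin n ≃ P) : ℝ≥0∞)⁻¹ • @Measure.count (Fin n ≃ P) ⊤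
    let A : Fin n → Set (Fin n ≃ P) := fun k =>
      {σ | IsGreedyMaxOn w {y | ∃ j : Fin n, j ≤ k ∧ σ j = y} (σ k)}
    (∀ k : Fin n, μ (A k) = 1 / ((k : ℕ) + 1)) ∧
      ∀ S : Finset (Fin n), μ (⋂ k ∈ S, A k) = ∏ k ∈ S, μ (A k) := by
  intro μ A
  haveI hPne : Nonempty P := Fintype.card_pos_iff.mp (by omega)
  haveI hEne : Nonempty (Fin n ≃ P) := ⟨(Fintype.equivFinOfCardEq hcard).symm⟩
  letI : MeasurableSpace (Fin n ≃ P) := ⊤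
  haveI : MeasurableSingletonClass (Fin n ≃ P) :=
    ⟨fun _ => MeasurableSpace.measurableSet_top⟩
  have hN : Fintype.card (Fin n ≃ P) ≠ 0 := Fintype.card_ne_zero
  have hmu : ∀ (F : Finset (Fin n ≃ P)) (s : Set (Fin n ≃ P)), s = ↑F →
      μ s = (Fintype.card (Fin n ≃ P) : ℝ≥0∞)⁻¹ * F.card := by
    intro F s hs
    show ((Fintype.card (Fin n ≃ P) : ℝ≥0∞)⁻¹ • @Measure.count (Fin n ≃ P) ⊤) s = _
    rw [Measure.smul_apply, smul_eq_mul, hs]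
    congr 1
    exact Measure.count_apply_finset F
  have hA : ∀ (k : Fin n) (σ : Fin n ≃ P), σ ∈ A k ↔ σ k = gmOf w (TsetGM σ k) := by
    intro k σ
    show IsGreedyMaxOn w {y | ∃ j : Fin n, j ≤ k ∧ σ j = y} (σ k) ↔ _
    exact isGreedyMaxOn_iff w (TsetGM_nonempty σ k)
  have hone : ∀ k : Fin n, μ (A k) = 1 / ((k : ℕ) + 1) := by
    intro k
    have hAk : A k = ↑(Finset.univ.filter fun σ : Fin n ≃ P =>
        ∀ j ∈ ({k} : Finset (Fin n)), σ j = gmOf w (TsetGM σ j)) := by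
      ext σ
      simp only [Finset.coe_filter, Finset.mem_univ, true_and, Set.mem_setOf_eq,
        Finset.mem_singleton]
      constructor
      · intro h j hj
        simp only [hj]
        exact (hA k σ).mp h
      · intro h
        exact (hA k σ).mpr (h k rfl)
    have hmc := main_count w ({k} : Finset (Fin n))
    rw [Finset.prod_singleton] at hmc
    calc μ (A k) = (Fintype.card (Fin n ≃ P) : ℝ≥0∞)⁻¹ *
          (Finset.univ.filter fun σ : Fin n ≃ P =>
            ∀ j ∈ ({k} : Finset (Fin n)), σ j = gmOf w (TsetGM σ j)).card :=
        hmu _ _ hAk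
      _ = (((k : ℕ) + 1 : ℕ) : ℝ≥0∞)⁻¹ := ennreal_count_aux hmc hN
      _ = 1 / ((k : ℕ) + 1) := by rw [one_div, Nat.cast_add, Nat.cast_one]
  refine ⟨hone, fun S => ?_⟩
  have hS : (⋂ k ∈ S, A k) = ↑(Finset.univ.filter fun σ : Fin n ≃ P =>
      ∀ k ∈ S, σ k = gmOf w (TsetGM σ k)) := by
    ext σ
    simp only [Set.mem_iInter, Finset.coe_filter, Finset.mem_univ, true_and,
      Set.mem_setOf_eq]
    exact forall₂_congr fun k _ => hA k σ
  calc μ (⋂ k ∈ S, A k)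
      = (Fintype.card (Fin n ≃ P) : ℝ≥0∞)⁻¹ *
        (Finset.univ.filter fun σ : Fin n ≃ P =>
          ∀ k ∈ S, σ k = gmOf w (TsetGM σ k)).card := hmu _ _ hS
    _ = ((∏ k ∈ S, ((k : ℕ) + 1) : ℕ) : ℝ≥0∞)⁻¹ :=
        ennreal_count_aux (main_count w S) hN
    _ = ∏ k ∈ S, (((k : ℕ) + 1 : ℕ) : ℝ≥0∞)⁻¹ :=
        (inv_prod_natCast S _ (fun k _ => Nat.succ_ne_zero _)).symm
    _ = ∏ k ∈ S, μ (A k) := by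
        refine Finset.prod_congr rfl fun k _ => ?_
        rw [hone k, one_div, Nat.cast_add, Nat.cast_one]
end

section
/- Let P be a finite nonempty partially ordered set, let x be a maximal element of P, and fix 0 < t ≤ 1. Independently of each other, let B_y for y ∈ P \ {x} be independent Bernoulli random variables with Pr(B_y = 1) = t, and let the weights W : P → [0,1] have independent coordinates uniform on [0,1]. Let Q be the induced partial order on {x} ∪ {y ∈ P \ {x} : B_y = 1}. Then the probability that x is the greedy maximum of Q with respect to the restriction of W equals μ_t(x). -/
open MeasureTheory Finset Function
open scoped Classical ENNReal

section Det

variable {α : Type*}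

lemma argminOn_mem (w : α → ℝ) (s : Finset α) (h : s.Nonempty) : argminOn w s h ∈ s :=
  (s.exists_min_image w h).choose_spec.1

lemma argminOn_le (w : α → ℝ) (s : Finset α) (h : s.Nonempty) {b : α} (hb : b ∈ s) :
    w (argminOn w s h) ≤ w b :=
  (s.exists_min_image w h).choose_spec.2 b hb

lemma argminOn_eq (w : α → ℝ) (s : Finset α) (h : s.Nonempty) {a : α}
    (hw : Function.Injective w) (ha : a ∈ s) (hmin : ∀ b ∈ s, w a ≤ w b) :
    argminOn w s h = a :=
  hw (le_antisymm (argminOn_le w s h ha) (hmin _ (argminOn_mem w s h)))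

lemma argminOn_congr {w w' : α → ℝ} (hw' : Function.Injective w')
    (hord : ∀ a b, w a ≤ w b ↔ w' a ≤ w' b) (s : Finset α) (h : s.Nonempty) :
    argminOn w s h = argminOn w' s h := by
  refine hw' (le_antisymm ?_ ?_)
  · rw [← hord]
    exact argminOn_le w s h (argminOn_mem w' s h)
  · exact argminOn_le w' s h (argminOn_mem w s h)

variable [PartialOrder α] [Fintype α]

lemma le_greedyStep (w : α → ℝ) (z : α) : z ≤ greedyStep w z := by
  rw [greedyStep]
  split_ifs with h
  · have := argminOn_mem w _ h
    rw [Finset.mem_filter] at this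
    exact this.2.le
  · exact le_rfl

lemma greedyStep_of_isMax (w : α → ℝ) {z : α} (hz : IsMax z) : greedyStep w z = z := by
  rw [greedyStep, dif_neg]
  rintro ⟨y, hy⟩
  rw [Finset.mem_filter] at hy
  exact hz.not_lt hy.2

lemma le_iterate_greedyStep (w : α → ℝ) (z : α) (n : ℕ) : z ≤ (greedyStep w)^[n] z := by
  induction n generalizing z with
  | zero => simp
  | succ n ih =>
    rw [Function.iterate_succ_apply]
    exact (le_greedyStep w z).trans (ih _)

lemma iterate_greedyStep_mono (w : α → ℝ) (z : α) {m n : ℕ} (h : m ≤ n) :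
    (greedyStep w)^[m] z ≤ (greedyStep w)^[n] z := by
  obtain ⟨k, rfl⟩ := Nat.exists_eq_add_of_le h
  rw [add_comm, Function.iterate_add_apply]
  exact le_iterate_greedyStep w _ k

lemma iterate_greedyStep_stab (w : α → ℝ) (z : α) {m : ℕ} (hm : Fintype.card α ≤ m) :
    (greedyStep w)^[m] z = (greedyStep w)^[Fintype.card α] z := by
  set f := greedyStep w with hf
  -- there exist i < j ≤ card with equal iterates
  have hninj : ¬ Function.Injective (fun i : Fin (Fintype.card α + 1) => f^[i.1] z) := by
    intro hinj
    have := Fintype.card_le_of_injective _ hinj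
    simp at this
  rw [Function.not_injective_iff] at hninj
  obtain ⟨i', j', hij', hne'⟩ := hninj
  have hmain : ∀ i j : Fin (Fintype.card α + 1), i < j → f^[i.1] z = f^[j.1] z →
      f^[m] z = f^[Fintype.card α] z := by
    intro i j hlt hij
    have hfix : f ((f^[i.1]) z) = f^[i.1] z := by
      have h1 : f^[i.1] z ≤ f^[i.1+1] z := iterate_greedyStep_mono w z (by omega)
      have h2 : f^[i.1+1] z ≤ f^[j.1] z := iterate_greedyStep_mono w z (by
        have := hlt.le; omega)
      rw [← hij] at h2
      have : f^[i.1+1] z = f^[i.1] z := le_antisymm h2 h1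
      rwa [Function.iterate_succ_apply'] at this
    have key : ∀ n, i.1 ≤ n → f^[n] z = f^[i.1] z := by
      intro n hn
      obtain ⟨k, rfl⟩ := Nat.exists_eq_add_of_le hn
      rw [add_comm, Function.iterate_add_apply, Function.iterate_fixed hfix]
    have hi : i.1 ≤ Fintype.card α := by omega
    rw [key m (le_trans hi hm), key (Fintype.card α) hi]
  rcases lt_or_gt_of_ne hne' with h | h
  · exact hmain i' j' h hij'
  · exact hmain j' i' h hij'.symm

end Det

section Det2

variable {α : Type*} [PartialOrder α] [Fintype α]

lemma greedyStep_congr {w w' : α → ℝ} (hw' : Function.Injective w')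
    (hord : ∀ a b, w a ≤ w b ↔ w' a ≤ w' b) : greedyStep w = greedyStep w' := by
  funext z
  rw [greedyStep, greedyStep]
  split_ifs with h
  · exact argminOn_congr hw' hord _ h
  · rfl

lemma greedyMax_congr [Nonempty α] {w w' : α → ℝ} (hw' : Function.Injective w')
    (hord : ∀ a b, w a ≤ w b ↔ w' a ≤ w' b) : greedyMax w = greedyMax w' := by
  rw [greedyMax, greedyMax, greedyStep_congr hw' hord, argminOn_congr hw' hord]

lemma greedyMax_smul [Nonempty α] {w : α → ℝ} (hw : Function.Injective w) {c : ℝ}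
    (hc : 0 < c) : greedyMax (fun a => c * w a) = greedyMax w := by
  refine greedyMax_congr hw fun a b => ?_
  exact mul_le_mul_iff_right₀ hc

lemma isGreedyMaxOn_congr {w w' : α → ℝ} {s : Set α} (h : ∀ y ∈ s, w y = w' y) (x : α) :
    IsGreedyMaxOn w s x ↔ IsGreedyMaxOn w' s x := by
  unfold IsGreedyMaxOn
  have : (fun y : s => w y.1) = fun y : s => w' y.1 := funext fun y => h y.1 y.2
  rw [this]

lemma isGreedyMaxOn_smul {w : α → ℝ} {s : Set α} (hw : Set.InjOn w s) {c : ℝ}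
    (hc : 0 < c) (x : α) :
    IsGreedyMaxOn (fun y => c * w y) s x ↔ IsGreedyMaxOn w s x := by
  unfold IsGreedyMaxOn
  have hinj : Function.Injective (fun y : s => w y.1) :=
    fun a b hab => Subtype.ext (hw a.2 b.2 hab)
  constructor
  · rintro ⟨hxs, hg⟩
    refine ⟨hxs, ?_⟩
    haveI : Nonempty s := ⟨⟨x, hxs⟩⟩
    have key : greedyMax (fun y : s => c * w y.1) = greedyMax (fun y : s => w y.1) := by
      have h := greedyMax_smul hinj hc
      simpa using h
    have hg' : greedyMax (fun y : s => c * w y.1) = ⟨x, hxs⟩ := hg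
    rw [key] at hg'
    exact hg'
  · rintro ⟨hxs, hg⟩
    refine ⟨hxs, ?_⟩
    haveI : Nonempty s := ⟨⟨x, hxs⟩⟩
    have key : greedyMax (fun y : s => c * w y.1) = greedyMax (fun y : s => w y.1) := by
      have h := greedyMax_smul hinj hc
      simpa using h
    show greedyMax (fun y : s => c * w y.1) = ⟨x, hxs⟩
    rw [key]
    exact hg

/-- Bridge lemma: the greedy maximum of `α` equals the maximal element `x` iff `x` is the
greedy maximum of the induced order on a weight-downward-closed set `s` containing `x`. -/
lemma greedyMax_eq_iff_isGreedyMaxOn [Nonempty α] {w : α → ℝ} (hw : Function.Injective w)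
    {x : α} (hx : IsMax x) {s : Set α} (hxs : x ∈ s) (hcl : ∀ y, w y ≤ w x → y ∈ s) :
    greedyMax w = x ↔ IsGreedyMaxOn w s x := by
  haveI : Nonempty s := ⟨⟨x, hxs⟩⟩
  have hwsinj : Function.Injective (fun y : s => w y.1) :=
    fun a b hab => Subtype.ext (hw hab)
  set ws : s → ℝ := fun y => w y.1 with hws
  set f := greedyStep w with hf
  set g := greedyStep ws with hg
  have H : ∀ n (z : s), (f^[n] z.1 = x ↔ g^[n] z = ⟨x, hxs⟩) := by
    intro n
    induction n with
    | zero =>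
      intro z
      simp only [Function.iterate_zero, id_eq]
      exact ⟨fun h => Subtype.ext h, fun h => congrArg Subtype.val h⟩
    | succ n ih =>
      intro z
      rcases eq_or_ne z.1 x with hzx | hzx
      · have h1 : f z.1 = z.1 := by rw [hzx]; exact greedyStep_of_isMax w hx
        have hzmax : IsMax z := by
          intro b hb
          have hzb : z.1 ≤ b.1 := hb
          rw [hzx] at hzb
          have hbx : b.1 ≤ z.1 := by rw [hzx]; exact hx hzb
          exact Subtype.coe_le_coe.mp hbx
        have h2 : g z = z := greedyStep_of_isMax ws hzmax
        rw [Function.iterate_succ_apply, Function.iterate_succ_apply, h1, h2]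
        exact ih z
      by_cases hlt : z.1 < x
      · -- one-step comparison
        have hA : (Finset.univ.filter fun y => z.1 < y).Nonempty :=
          ⟨x, by simp [hlt]⟩
        have hxA : x ∈ Finset.univ.filter fun y => z.1 < y := by simp [hlt]
        set a := argminOn w _ hA with ha
        have haA : a ∈ Finset.univ.filter fun y => z.1 < y := argminOn_mem _ _ _
        have hza : z.1 < a := (Finset.mem_filter.mp haA).2
        have hwax : w a ≤ w x := argminOn_le _ _ hA hxA
        have has : a ∈ s := hcl a hwax
        have hA' : (Finset.univ.filter fun y : s => z < y).Nonempty :=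
          ⟨⟨x, hxs⟩, by
            simp only [Finset.mem_filter, Finset.mem_univ, true_and]
            exact Subtype.coe_lt_coe.mp (by simpa using hlt)⟩
        set a' := argminOn ws _ hA' with ha'
        have ha'A : a' ∈ Finset.univ.filter fun y : s => z < y := argminOn_mem _ _ _
        have hza' : z < a' := (Finset.mem_filter.mp ha'A).2
        have h1 : w a ≤ ws a' := by
          refine argminOn_le w _ hA (b := a'.1) ?_
          simp only [Finset.mem_filter, Finset.mem_univ, true_and]
          exact Subtype.coe_lt_coe.mpr hza'
        have h2 : ws a' ≤ w a := by
          refine argminOn_le ws _ hA' (b := ⟨a, has⟩) ?_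
          simp only [Finset.mem_filter, Finset.mem_univ, true_and]
          exact Subtype.mk_lt_mk.mpr hza |>.trans_le le_rfl |> (fun h => h)
        have haa' : a'.1 = a := hw (le_antisymm h2 h1)
        have hfz : f z.1 = a := by rw [hf, greedyStep, dif_pos hA]
        have hgz : g z = a' := by rw [hg, greedyStep, dif_pos hA']
        rw [Function.iterate_succ_apply, Function.iterate_succ_apply, hfz, hgz]
        have := ih a'
        rwa [haa'] at this
      · -- incomparable: both chains stay away from x
        have hc1 : f^[n+1] z.1 ≠ x := by
          intro hcon
          have hle := le_iterate_greedyStep w z.1 (n + 1)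
          rw [← hf] at hle
          rw [hcon] at hle
          exact hlt (lt_of_le_of_ne hle hzx)
        have hc2 : g^[n+1] z ≠ ⟨x, hxs⟩ := by
          intro hcon
          have hle := le_iterate_greedyStep ws z (n + 1)
          rw [← hg] at hle
          rw [hcon] at hle
          have : z.1 ≤ x := hle
          exact hlt (lt_of_le_of_ne this hzx)
        exact iff_of_false hc1 hc2
  -- starting points agree
  have hu0s : (argminOn w Finset.univ Finset.univ_nonempty) ∈ s :=
    hcl _ (argminOn_le w _ _ (Finset.mem_univ x))
  set u0 : α := argminOn w Finset.univ Finset.univ_nonempty with hu0def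
  set u0' : s := argminOn ws Finset.univ Finset.univ_nonempty with hu0'def
  have hcoe : u0'.1 = u0 := by
    refine hw (le_antisymm ?_ ?_)
    · exact argminOn_le ws Finset.univ _ (Finset.mem_univ ⟨u0, hu0s⟩)
    · exact argminOn_le w Finset.univ _ (Finset.mem_univ u0'.1)
  have h1 : greedyMax w = f^[Fintype.card α + Fintype.card s] u0 :=
    (iterate_greedyStep_stab w u0 (Nat.le_add_right _ _)).symm
  have h2 : greedyMax ws = g^[Fintype.card α + Fintype.card s] u0' :=
    (iterate_greedyStep_stab ws u0' (Nat.le_add_left _ _)).symm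
  have h3 := H (Fintype.card α + Fintype.card s) u0'
  rw [hcoe] at h3
  constructor
  · intro h
    refine ⟨hxs, ?_⟩
    show greedyMax ws = ⟨x, hxs⟩
    rw [h2]
    exact h3.mp (by rw [← h1]; exact h)
  · rintro ⟨hxs', h⟩
    rw [h1]
    refine h3.mpr ?_
    rw [← h2]
    exact h

end Det2
section MeasHelpers

variable {ι : Type*} [Fintype ι]

/-- `Measure.pi` of pointwise scalar multiples. -/
lemma pi_smul_eq (k : ι → ℝ≥0∞) (hk : ∀ i, k i ≠ ∞) (m : ι → Measure ℝ)
    [∀ i, IsFiniteMeasure (m i)] [∀ i, SigmaFinite (m i)] :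
    Measure.pi (fun i => k i • m i) = (∏ i, k i) • Measure.pi m := by
  have key : ∀ s : ι → Set ℝ, (∀ i, MeasurableSet (s i)) →
      ((∏ i, k i) • Measure.pi m) (Set.univ.pi s) = ∏ i, (k i • m i) (s i) := by
    intro s hs
    rw [Measure.smul_apply, smul_eq_mul, Measure.pi_pi]
    simp only [Measure.smul_apply, smul_eq_mul]
    rw [Finset.prod_mul_distrib]
  have h1 : ∀ i, IsFiniteMeasure (k i • m i) := fun i =>
    ⟨by
      rw [Measure.smul_apply, smul_eq_mul]
      exact ENNReal.mul_lt_top (hk i).lt_top (measure_lt_top _ _)⟩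
  haveI hSF : ∀ i, SigmaFinite ((fun i => k i • m i) i) := fun i =>
    @IsFiniteMeasure.toSigmaFinite ℝ _ ((fun i => k i • m i) i) (h1 i)
  exact Measure.pi_eq (μ := fun i => k i • m i)
    (μ' := (∏ i, k i) • Measure.pi m) fun s hs => key s hs

/-- `Measure.pi` of restrictions is the restriction of `Measure.pi` to a box. -/
lemma pi_restrict_eq (m : ι → Measure ℝ) [∀ i, IsFiniteMeasure (m i)] [∀ i, SigmaFinite (m i)]
    (B : ι → Set ℝ) (hB : ∀ i, MeasurableSet (B i)) :
    Measure.pi (fun i => (m i).restrict (B i)) = (Measure.pi m).restrict (Set.univ.pi B) := by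
  refine Measure.pi_eq (μ := fun i => (m i).restrict (B i))
    (μ' := (Measure.pi m).restrict (Set.univ.pi B)) fun s hs => ?_
  rw [Measure.restrict_apply (MeasurableSet.univ_pi hs), ← Set.pi_inter_distrib,
    Measure.pi_pi]
  exact Finset.prod_congr rfl fun i _ => (Measure.restrict_apply (hs i)).symm

/-- Pushforward of a product measure under a product of measurable equivalences. -/
lemma pi_map_piCongrRight (m : ι → Measure ℝ) [∀ i, IsFiniteMeasure (m i)] [∀ i, SigmaFinite (m i)]
    (σ : ι → (ℝ ≃ᵐ ℝ)) :
    (Measure.pi m).map (MeasurableEquiv.piCongrRight σ) =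
      Measure.pi (fun i => (m i).map (σ i)) := by
  haveI : ∀ i, IsFiniteMeasure ((m i).map (σ i)) := fun i =>
    ⟨by
      rw [MeasurableEquiv.map_apply]
      exact measure_lt_top _ _⟩
  refine (Measure.pi_eq (μ := fun i => (m i).map (σ i))
    (μ' := (Measure.pi m).map (MeasurableEquiv.piCongrRight σ)) fun s hs => ?_).symm
  rw [MeasurableEquiv.map_apply]
  have hpre : (MeasurableEquiv.piCongrRight σ) ⁻¹' Set.univ.pi s =
      Set.univ.pi (fun i => (σ i) ⁻¹' (s i)) := by
    ext w
    simp [MeasurableEquiv.piCongrRight, Equiv.piCongrRight, Set.mem_pi]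
  rw [hpre, Measure.pi_pi]
  exact Finset.prod_congr rfl fun i _ => (MeasurableEquiv.map_apply _ _).symm

/-- A finite measurable partition decomposes the (outer) measure of any set. -/
lemma measure_eq_sum_partition {Ω : Type*} [MeasurableSpace Ω] (μ : Measure Ω)
    (M : ι → Set Ω) (hM : ∀ i, MeasurableSet (M i)) (hd : Pairwise (Disjoint on M))
    (hcov : (⋃ i, M i) = Set.univ) (S : Set Ω) :
    μ S = ∑ i, μ (S ∩ M i) := by
  have key : ∀ F : Finset ι, μ (S ∩ ⋃ i ∈ F, M i) = ∑ i ∈ F, μ (S ∩ M i) := by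
    intro F
    induction F using Finset.induction_on with
    | empty => simp
    | @insert j F hj ih =>
      have hsplit := measure_inter_add_diff (μ := μ) (S ∩ ⋃ i ∈ insert j F, M i) (hM j)
      have e1 : S ∩ (⋃ i ∈ insert j F, M i) ∩ M j = S ∩ M j := by
        ext ω
        simp only [Set.mem_inter_iff, Set.mem_iUnion]
        constructor
        · rintro ⟨⟨h1, _⟩, h2⟩; exact ⟨h1, h2⟩
        · rintro ⟨h1, h2⟩; exact ⟨⟨h1, ⟨j, Finset.mem_insert_self j F, h2⟩⟩, h2⟩
      have e2 : (S ∩ ⋃ i ∈ insert j F, M i) \ M j = S ∩ ⋃ i ∈ F, M i := by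
        ext ω
        simp only [Set.mem_diff, Set.mem_inter_iff, Set.mem_iUnion]
        constructor
        · rintro ⟨⟨h1, ⟨i, hiF, hi⟩⟩, h2⟩
          rcases Finset.mem_insert.mp hiF with rfl | hiF'
          · exact absurd hi h2
          · exact ⟨h1, i, hiF', hi⟩
        · rintro ⟨h1, ⟨i, hiF, hi⟩⟩
          have hij : i ≠ j := fun h => hj (h ▸ hiF)
          refine ⟨⟨h1, ⟨i, Finset.mem_insert_of_mem hiF, hi⟩⟩, ?_⟩
          intro hωj
          exact (Set.disjoint_left.mp (hd hij)) hi hωj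
      rw [e1, e2] at hsplit
      rw [Finset.sum_insert hj, ← ih, ← hsplit]
  have := key Finset.univ
  simpa [hcov] using this

/-- Pushforward of uniform `[0,1]` under an increasing affine map. -/
lemma map_affine_uniform {c d : ℝ} (hc : 0 < c) (σ : ℝ → ℝ) (hσ : σ = fun r => d + c * r) :
    (volume.restrict (Set.Icc (0:ℝ) 1)).map σ =
      ENNReal.ofReal c⁻¹ • volume.restrict (Set.Icc d (d + c)) := by
  subst hσ
  have hmeas : Measurable fun r : ℝ => d + c * r :=
    measurable_const.add (measurable_id.const_mul c)
  have hf : Measurable fun r : ℝ => c * r := measurable_const.mul measurable_id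
  have hg : Measurable fun r : ℝ => d + r := measurable_const.add measurable_id
  have hmapvol : volume.map (fun r : ℝ => d + c * r) = ENNReal.ofReal c⁻¹ • volume := by
    have hcomp : (fun r : ℝ => d + c * r) = (fun r : ℝ => d + r) ∘ (fun r : ℝ => c * r) := rfl
    rw [hcomp, ← Measure.map_map hg hf]
    have h3 : volume.map (fun r : ℝ => c * r) = ENNReal.ofReal |c⁻¹| • volume :=
      Real.map_volume_mul_left (ne_of_gt hc)
    rw [h3, Measure.map_smul]
    have h4 : volume.map (fun r : ℝ => d + r) = volume := map_add_left_eq_self volume d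
    rw [h4, abs_of_pos (inv_pos.mpr hc)]
  ext B hB
  rw [Measure.map_apply hmeas hB, Measure.restrict_apply (hmeas hB),
    Measure.smul_apply, Measure.restrict_apply hB, smul_eq_mul]
  have hIcc : Set.Icc (0:ℝ) 1 = (fun r : ℝ => d + c * r) ⁻¹' Set.Icc d (d + c) := by
    ext r
    simp only [Set.mem_preimage, Set.mem_Icc]
    constructor
    · rintro ⟨h1, h2⟩; constructor <;> nlinarith
    · rintro ⟨h1, h2⟩
      constructor
      · nlinarith
      · nlinarith
  rw [hIcc, ← Set.preimage_inter]
  rw [← Measure.map_apply hmeas (hB.inter measurableSet_Icc), hmapvol,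
    Measure.smul_apply, smul_eq_mul]

end MeasHelpers
section NullSets

variable (P : Type) [Fintype P]

local notation "unif" => volume.restrict (Set.Icc (0:ℝ) 1)

instance : IsProbabilityMeasure (volume.restrict (Set.Icc (0:ℝ) 1)) :=
  ⟨by simp [Real.volume_Icc]⟩

lemma pair_eq_null {a b : P} (hab : a ≠ b) :
    (Measure.pi fun _ : P => unif) {w : P → ℝ | w a = w b} = 0 := by
  have hb' : ¬ b = a := fun h => hab h.symm
  set e := MeasurableEquiv.piEquivPiSubtypeProd (fun _ : P => ℝ) (fun y => y = a) with he
  have hmp := measurePreserving_piEquivPiSubtypeProd (fun _ : P => unif) (fun y => y = a)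
  set T : Set (({y : P // y = a} → ℝ) × ({y : P // ¬ y = a} → ℝ)) :=
    {q | q.2 ⟨b, hb'⟩ = q.1 ⟨a, rfl⟩} with hT
  have hTm : MeasurableSet T := by
    apply measurableSet_eq_fun
    · exact (measurable_pi_apply _).comp measurable_snd
    · exact (measurable_pi_apply _).comp measurable_fst
  have hpre : {w : P → ℝ | w a = w b} = e ⁻¹' T := by
    ext w
    simp only [Set.mem_setOf_eq, Set.mem_preimage, hT, he,
      MeasurableEquiv.piEquivPiSubtypeProd, Equiv.piEquivPiSubtypeProd]
    exact ⟨fun h => h.symm, fun h => h.symm⟩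
  rw [hpre, ← Measure.map_apply e.measurable hTm, hmp.map_eq, Measure.prod_apply hTm]
  have hzero : ∀ u' : {y : P // y = a} → ℝ,
      (Measure.pi fun _ : {y : P // ¬ y = a} => unif)
        (Prod.mk u' ⁻¹' T) = 0 := by
    intro u'
    have : Prod.mk u' ⁻¹' T = {v : {y : P // ¬ y = a} → ℝ | v ⟨b, hb'⟩ = u' ⟨a, rfl⟩} := rfl
    rw [this]
    exact Measure.pi_hyperplane _ _ _
  simp only [hzero]
  simp

lemma inj_compl_null :
    (Measure.pi fun _ : P => unif) {w : P → ℝ | ¬ Function.Injective w} = 0 := by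
  have hsub : {w : P → ℝ | ¬ Function.Injective w} ⊆
      ⋃ (p : P × P), ⋃ (_ : p.1 ≠ p.2), {w : P → ℝ | w p.1 = w p.2} := by
    intro w hw
    rw [Set.mem_setOf_eq, Function.not_injective_iff] at hw
    obtain ⟨a, b, hab, hne⟩ := hw
    exact Set.mem_iUnion.mpr ⟨(a, b), Set.mem_iUnion.mpr ⟨hne, hab⟩⟩
  refine measure_mono_null hsub ?_
  refine measure_iUnion_null fun p => measure_iUnion_null fun hne => ?_
  exact pair_eq_null P hne

end NullSets

section Main

/-- An increasing affine measurable equivalence of `ℝ`. -/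
noncomputable def affineMEquiv (c d : ℝ) (hc : 0 < c) : ℝ ≃ᵐ ℝ :=
  ((Homeomorph.mulLeft₀ c (ne_of_gt hc)).trans (Homeomorph.addLeft d)).toMeasurableEquiv

lemma affineMEquiv_apply (c d : ℝ) (hc : 0 < c) (r : ℝ) :
    affineMEquiv c d hc r = d + c * r := rfl

variable (P : Type) [Fintype P] [PartialOrder P] [Nonempty P]

local notation "unif" => volume.restrict (Set.Icc (0:ℝ) 1)

theorem main_thinned (x : P) (hx : IsMax x) {t : ℝ} (ht0 : 0 < t) (ht1 : t ≤ 1)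
    (β : Measure Bool) [IsProbabilityMeasure β]
    (hβt : β {true} = ENNReal.ofReal t) (hβf : β {false} = 1 - ENNReal.ofReal t) :
    ((Measure.pi fun _ : P => unif).prod (Measure.pi fun _ : {y : P // y ≠ x} => β))
      {ω : (P → ℝ) × ({y : P // y ≠ x} → Bool) |
        IsGreedyMaxOn ω.1 {y | y = x ∨ ∃ h : y ≠ x, ω.2 ⟨y, h⟩ = true} x} =
      ((Measure.pi fun _ : P => unif) {w | IsGreedyMaxOn w Set.univ x ∧ w x ≤ t}) /
        ((Measure.pi fun _ : P => unif) {w | w x ≤ t}) := by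
  set K := {y : P // y ≠ x} with hK
  set μP := (Measure.pi fun _ : P => unif) with hμP
  set πB := (Measure.pi fun _ : K => β) with hπB
  set S : (K → Bool) → Set P :=
    (fun b => {y | y = x ∨ ∃ h : y ≠ x, b ⟨y, h⟩ = true}) with hS
  set G : (K → Bool) → Set (P → ℝ) := (fun b => {w | IsGreedyMaxOn w (S b) x}) with hG
  -- a.e. injectivity
  have hinj_ae : ∀ᵐ w ∂μP, Function.Injective w := by
    rw [ae_iff]
    exact inj_compl_null P
  -- ### Part I : LHS as a sum over Boolean patterns
  have hsingB : ∀ b : K → Bool, MeasurableSet ({b} : Set (K → Bool)) := by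
    intro b
    rw [← Set.univ_pi_singleton b]
    exact MeasurableSet.univ_pi fun y => measurableSet_singleton _
  have hLHS : (μP.prod πB)
      {ω : (P → ℝ) × (K → Bool) | IsGreedyMaxOn ω.1 (S ω.2) x} =
      ∑ b : K → Bool, μP (G b) * πB {b} := by
    rw [measure_eq_sum_partition (μP.prod πB) (fun b : K → Bool => Set.univ ×ˢ {b})
      (fun b => MeasurableSet.univ.prod (hsingB b))
      (fun b b' hbb' => by
        simp only [Function.onFun, Set.disjoint_left]
        rintro ⟨w, c⟩ h1 h2
        simp only [Set.mem_prod, Set.mem_singleton_iff] at h1 h2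
        exact hbb' (h1.2.symm.trans h2.2))
      (Set.eq_univ_of_forall fun ω =>
        Set.mem_iUnion.mpr ⟨ω.2, by simp⟩)]
    refine Finset.sum_congr rfl fun b _ => ?_
    have hE : {ω : (P → ℝ) × (K → Bool) | IsGreedyMaxOn ω.1 (S ω.2) x} ∩
        Set.univ ×ˢ {b} = (G b) ×ˢ ({b} : Set (K → Bool)) := by
      ext ⟨w, c⟩
      simp only [Set.mem_inter_iff, Set.mem_setOf_eq, Set.mem_prod, Set.mem_univ,
        true_and, Set.mem_singleton_iff, hG]
      constructor
      · rintro ⟨h1, rfl⟩; exact ⟨h1, rfl⟩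
      · rintro ⟨h1, rfl⟩; exact ⟨h1, rfl⟩
    rw [hE, Measure.prod_prod]
  have hπB_singleton : ∀ b : K → Bool, πB {b} = ∏ y : K, β {b y} := by
    intro b
    rw [hπB, ← Set.univ_pi_singleton b, Measure.pi_pi]
  -- ### Part II : the denominator
  have hCx : μP {w : P → ℝ | w x ≤ t} = ENNReal.ofReal t := by
    have hset : {w : P → ℝ | w x ≤ t} =
        Set.univ.pi (fun y : P => if y = x then Set.Iic t else Set.univ) := by
      ext w
      simp only [Set.mem_setOf_eq, Set.mem_pi, Set.mem_univ, forall_true_left]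
      constructor
      · intro h y
        by_cases hy : y = x
        · subst hy; simp [h]
        · simp [hy]
      · intro h
        have := h x
        simpa using this
    rw [hμP, hset, Measure.pi_pi]
    have hval : ∀ y : P, unif (if y = x then Set.Iic t else Set.univ) =
        if y = x then ENNReal.ofReal t else 1 := by
      intro y
      by_cases hy : y = x
      · simp only [hy, if_true]
        rw [Measure.restrict_apply measurableSet_Iic]
        have : Set.Iic t ∩ Set.Icc (0:ℝ) 1 = Set.Icc (0:ℝ) t := by
          ext r
          simp only [Set.mem_inter_iff, Set.mem_Iic, Set.mem_Icc]
          constructor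
          · rintro ⟨h1, h2, h3⟩; exact ⟨h2, h1⟩
          · rintro ⟨h1, h2⟩; exact ⟨h2, h1, h2.trans ht1⟩
        rw [this, Real.volume_Icc]
        simp
      · simp only [hy, if_false]
        simpa using measure_univ
    simp only [hval]
    simp
  -- ### Part III : the numerator, pattern by pattern
  -- the box of each pattern
  set B : (K → Bool) → P → Set ℝ := (fun b y =>
    if h : y = x then Set.Iic t else (if b ⟨y, h⟩ then Set.Iic t else Set.Ioi t)) with hB
  have hBmeas : ∀ b y, MeasurableSet (B b y) := by
    intro b y
    rw [hB]
    by_cases hy : y = x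
    · simp only [hy, dif_pos]; exact measurableSet_Iic
    · simp only [dif_neg hy]
      by_cases hb : b ⟨y, hy⟩ <;> simp [hb, measurableSet_Iic, measurableSet_Ioi]
  have hBC_mem : ∀ (b : K → Bool) (w : P → ℝ), w ∈ Set.univ.pi (B b) ↔
      (w x ≤ t ∧ ∀ y : K, (w y.1 ≤ t ↔ b y = true)) := by
    intro b w
    simp only [Set.mem_pi, Set.mem_univ, forall_true_left, hB]
    constructor
    · intro h
      refine ⟨by simpa using h x, fun y => ?_⟩
      have hy := h y.1
      rw [dif_neg y.2, show (⟨y.1, y.2⟩ : K) = y from Subtype.ext rfl] at hy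
      cases hby : b y with
      | false =>
        rw [hby] at hy
        simp at hy
        simp only [Bool.false_eq_true, iff_false, not_le]
        exact hy
      | true =>
        rw [hby] at hy
        simp at hy
        simp only [iff_true]
        exact hy
    · rintro ⟨h1, h2⟩ y
      by_cases hyx : y = x
      · subst hyx; simpa using h1
      · rw [dif_neg hyx]
        have hy2 := h2 ⟨y, hyx⟩
        cases hby : b ⟨y, hyx⟩ with
        | false =>
          rw [hby] at hy2
          simp at hy2
          simpa using hy2
        | true =>
          rw [hby] at hy2
          simp at hy2
          simpa using hy2
  -- partition of the numerator
  have hNm : μP {w : P → ℝ | IsGreedyMaxOn w Set.univ x ∧ w x ≤ t} =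
      ∑ b : K → Bool, μP ({w : P → ℝ | IsGreedyMaxOn w Set.univ x ∧ w x ≤ t} ∩
        {w : P → ℝ | ∀ y : K, (w y.1 ≤ t ↔ b y = true)}) := by
    refine measure_eq_sum_partition μP
      (fun b : K → Bool => {w : P → ℝ | ∀ y : K, (w y.1 ≤ t ↔ b y = true)})
      (fun b => ?_) (fun b b' hbb' => ?_) ?_ _
    · show MeasurableSet {w : P → ℝ | ∀ y : K, (w y.1 ≤ t ↔ b y = true)}
      have : {w : P → ℝ | ∀ y : K, (w y.1 ≤ t ↔ b y = true)} =
          ⋂ y : K, {w : P → ℝ | w y.1 ≤ t ↔ b y = true} := by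
        ext w; simp
      rw [this]
      refine MeasurableSet.iInter fun y => ?_
      cases hby : b y with
      | false =>
        have he : {w : P → ℝ | w y.1 ≤ t ↔ false = true} = {w : P → ℝ | ¬ w y.1 ≤ t} := by
          ext w; simp
        rw [he]
        exact (measurableSet_le (measurable_pi_apply _) measurable_const).compl
      | true =>
        have he : {w : P → ℝ | w y.1 ≤ t ↔ true = true} = {w : P → ℝ | w y.1 ≤ t} := by
          ext w; simp
        rw [he]
        exact measurableSet_le (measurable_pi_apply _) measurable_const
    · simp only [Function.onFun, Set.disjoint_left]
      intro w h1 h2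
      apply hbb'
      funext y
      have e1 := h1 y
      have e2 := h2 y
      cases hby : b y with
      | false =>
        cases hby' : b' y with
        | false => rfl
        | true =>
          rw [hby] at e1; rw [hby'] at e2
          simp at e1 e2
          exact absurd e2 (not_le.mpr e1)
      | true =>
        cases hby' : b' y with
        | false =>
          rw [hby] at e1; rw [hby'] at e2
          simp at e1 e2
          exact absurd e1 (not_le.mpr e2)
        | true => rfl
    · ext w
      simp only [Set.mem_iUnion, Set.mem_setOf_eq, Set.mem_univ, iff_true]
      refine ⟨fun y => if w y.1 ≤ t then true else false, fun y => ?_⟩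
      by_cases hle : w y.1 ≤ t <;> simp [hle]
  -- per-pattern identification with the boxed greedy event
  have hperb_ae : ∀ b : K → Bool,
      μP ({w : P → ℝ | IsGreedyMaxOn w Set.univ x ∧ w x ≤ t} ∩
        {w : P → ℝ | ∀ y : K, (w y.1 ≤ t ↔ b y = true)}) =
      μP (G b ∩ Set.univ.pi (B b)) := by
    intro b
    have bridge_univ : ∀ w : P → ℝ, Function.Injective w →
        (IsGreedyMaxOn w Set.univ x ↔ greedyMax w = x) := fun w hw =>
      (greedyMax_eq_iff_isGreedyMaxOn hw hx (s := Set.univ) (Set.mem_univ x)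
        (fun y _ => Set.mem_univ y)).symm
    have bridge_Sb : ∀ w : P → ℝ, Function.Injective w → w x ≤ t →
        (∀ y : K, (w y.1 ≤ t ↔ b y = true)) →
        (IsGreedyMaxOn w (S b) x ↔ greedyMax w = x) := by
      intro w hw hxt hpat
      refine (greedyMax_eq_iff_isGreedyMaxOn hw hx (s := S b) (Or.inl rfl) ?_).symm
      intro y hy
      by_cases hyx : y = x
      · exact Or.inl hyx
      · exact Or.inr ⟨hyx, (hpat ⟨y, hyx⟩).mp (hy.trans hxt)⟩
    refine measure_congr ?_
    rw [Filter.eventuallyEq_set]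
    filter_upwards [hinj_ae] with w hw
    simp only [Set.mem_inter_iff, Set.mem_setOf_eq]
    rw [hBC_mem b w]
    constructor
    · rintro ⟨⟨hgm, hxt⟩, hpat⟩
      exact ⟨(bridge_Sb w hw hxt hpat).mpr ((bridge_univ w hw).mp hgm), hxt, hpat⟩
    · rintro ⟨hgb, hxt, hpat⟩
      have hgb' : IsGreedyMaxOn w (S b) x := hgb
      exact ⟨⟨(bridge_univ w hw).mpr ((bridge_Sb w hw hxt hpat).mp hgb'), hxt⟩, hpat⟩
  -- the per-pattern product formula
  have hperb : ∀ b : K → Bool,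
      μP (G b ∩ Set.univ.pi (B b)) = ENNReal.ofReal t * ((∏ y : K, β {b y}) * μP (G b)) := by
    intro b
    -- membership facts for `S b`
    have hxS : x ∈ S b := Or.inl rfl
    have hmemS : ∀ y : K, (y.1 ∈ S b ↔ b y = true) := by
      intro y
      constructor
      · rintro (h | ⟨h, hb2⟩)
        · exact absurd h y.2
        · rwa [show (⟨y.1, h⟩ : K) = y from Subtype.ext rfl] at hb2
      · intro hby
        exact Or.inr ⟨y.2, by rwa [show (⟨y.1, y.2⟩ : K) = y from Subtype.ext rfl]⟩
    -- the coordinate sets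
    set ρ : P → Set ℝ :=
      (fun y => if y ∈ S b then Set.Icc 0 t else Set.Ioc t 1) with hρ
    have hρS : ∀ y : P, y ∈ S b → ρ y = Set.Icc 0 t := by
      intro y hy; rw [hρ]; simp only [if_pos hy]
    have hρnS : ∀ y : P, y ∉ S b → ρ y = Set.Ioc t 1 := by
      intro y hy; rw [hρ]; simp only [if_neg hy]
    have hcoord : ∀ y : P, (unif).restrict (B b y) = volume.restrict (ρ y) := by
      intro y
      rw [Measure.restrict_restrict (hBmeas b y)]
      by_cases hyx : y = x
      · subst hyx
        rw [hρS y hxS]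
        have hBy : B b y = Set.Iic t := by rw [hB]; simp
        rw [hBy]
        congr 1
        ext r
        simp only [Set.mem_inter_iff, Set.mem_Iic, Set.mem_Icc]
        constructor
        · rintro ⟨h1, h2, h3⟩; exact ⟨h2, h1⟩
        · rintro ⟨h1, h2⟩; exact ⟨h2, h1, h2.trans ht1⟩
      · have hBy : B b y = if b ⟨y, hyx⟩ then Set.Iic t else Set.Ioi t := by
          rw [hB]; simp only [dif_neg hyx]
        cases hby : b ⟨y, hyx⟩ with
        | true =>
          have hyS : y ∈ S b := Or.inr ⟨hyx, hby⟩
          rw [hρS y hyS, hBy, hby]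
          simp only [if_true]
          congr 1
          ext r
          simp only [Set.mem_inter_iff, Set.mem_Iic, Set.mem_Icc]
          constructor
          · rintro ⟨h1, h2, h3⟩; exact ⟨h2, h1⟩
          · rintro ⟨h1, h2⟩; exact ⟨h2, h1, h2.trans ht1⟩
        | false =>
          have hyS : y ∉ S b := by
            rintro (h | ⟨h, hb2⟩)
            · exact hyx h
            · rw [show (⟨y, h⟩ : K) = ⟨y, hyx⟩ from Subtype.ext rfl, hby] at hb2
              exact absurd hb2 (by simp)
          rw [hρnS y hyS, hBy, hby]
          simp only [Bool.false_eq_true, if_false]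
          congr 1
          ext r
          simp only [Set.mem_inter_iff, Set.mem_Ioi, Set.mem_Icc, Set.mem_Ioc]
          constructor
          · rintro ⟨h1, h2, h3⟩; exact ⟨h1, h3⟩
          · rintro ⟨h1, h2⟩; exact ⟨h1, (ht0.trans h1).le, h2⟩
    -- rewrite the measure as a product measure over the coordinate sets
    have hb1 : μP (G b ∩ Set.univ.pi (B b)) =
        Measure.pi (fun y : P => volume.restrict (ρ y)) (G b) := by
      rw [← Measure.restrict_apply' (MeasurableSet.univ_pi (hBmeas b)), hμP,
        ← pi_restrict_eq (fun _ : P => unif) (B b) (hBmeas b)]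
      congr 1
      exact congrArg Measure.pi (funext hcoord)
    -- slopes
    set slope : P → ℝ := (fun y => if y ∈ S b then t else 1 - t) with hslope
    have hslopeS : ∀ y : P, y ∈ S b → slope y = t := by
      intro y hy; rw [hslope]; simp only [if_pos hy]
    have hslopenS : ∀ y : P, y ∉ S b → slope y = 1 - t := by
      intro y hy; rw [hslope]; simp only [if_neg hy]
    have hmass : ∀ y : K, β {b y} = ENNReal.ofReal (slope y.1) := by
      intro y
      cases hby : b y with
      | true =>
        rw [hβt, hslopeS y.1 ((hmemS y).mpr hby)]
      | false =>
        rw [hβf, hslopenS y.1 (fun hc => by rw [(hmemS y).mp hc] at hby; cases hby)]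
        rw [ENNReal.ofReal_sub _ ht0.le, ENNReal.ofReal_one]
    have hKprod : (∏ y : K, β {b y}) = ∏ y : K, ENNReal.ofReal (slope y.1) :=
      Finset.prod_congr rfl fun y _ => hmass y
    -- product split over P = {x} ∪ K
    have hsplit : ∏ y : P, ENNReal.ofReal (slope y) =
        ENNReal.ofReal t * ∏ y : K, ENNReal.ofReal (slope y.1) := by
      rw [← Finset.mul_prod_erase Finset.univ (fun y => ENNReal.ofReal (slope y))
        (Finset.mem_univ x)]
      congr 1
      · rw [hslopeS x hxS]
      · exact (Finset.prod_subtype (Finset.univ.erase x) (p := fun y => y ≠ x)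
          (fun y => by simp [Finset.mem_erase]) (fun y => ENNReal.ofReal (slope y)))
    rw [hb1, hKprod]
    by_cases hdeg : ∃ y : K, b y = false ∧ t = 1
    · -- degenerate case : both sides vanish
      obtain ⟨y0, hby0, ht1'⟩ := hdeg
      have hy0S : y0.1 ∉ S b := fun hc => by rw [(hmemS y0).mp hc] at hby0; cases hby0
      have hzero1 : Measure.pi (fun y : P => volume.restrict (ρ y)) (G b) = 0 := by
        refine le_antisymm ?_ zero_le
        calc Measure.pi (fun y : P => volume.restrict (ρ y)) (G b)
            ≤ Measure.pi (fun y : P => volume.restrict (ρ y)) Set.univ :=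
              measure_mono (Set.subset_univ _)
          _ = ∏ y : P, (volume.restrict (ρ y)) Set.univ := Measure.pi_univ _
          _ = 0 := by
              refine Finset.prod_eq_zero (Finset.mem_univ y0.1) ?_
              rw [Measure.restrict_apply_univ, hρnS y0.1 hy0S, Real.volume_Ioc, ht1']
              simp
      have hzero2 : ENNReal.ofReal (slope y0.1) = 0 := by
        rw [hslopenS y0.1 hy0S, ht1']
        simp
      rw [hzero1]
      rw [Finset.prod_eq_zero (Finset.mem_univ y0) hzero2]
      simp
    · -- nondegenerate case
      push_neg at hdeg
      have hslope_pos : ∀ y : P, 0 < slope y := by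
        intro y
        by_cases hyS : y ∈ S b
        · rw [hslopeS y hyS]; exact ht0
        · rw [hslopenS y hyS]
          have hynx : y ≠ x := fun hc => hyS (hc ▸ hxS)
          have hbyf : b ⟨y, hynx⟩ = false := by
            cases hb2 : b ⟨y, hynx⟩ with
            | true => exact absurd (Or.inr ⟨hynx, hb2⟩) hyS
            | false => rfl
          have := hdeg ⟨y, hynx⟩ hbyf
          have : t < 1 := lt_of_le_of_ne ht1 this
          linarith
      set σ : ∀ _ : P, ℝ ≃ᵐ ℝ :=
        (fun y => affineMEquiv (slope y) (if y ∈ S b then 0 else t) (hslope_pos y)) with hσ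
      have hσ_apply : ∀ (y : P) (r : ℝ), σ y r = (if y ∈ S b then 0 else t) + slope y * r :=
        fun y r => rfl
      have hcoe : ∀ y : P, ⇑(σ y) = fun r => (if y ∈ S b then (0:ℝ) else t) + slope y * r :=
        fun y => funext fun r => rfl
      have hone : ∀ y : P, ENNReal.ofReal (slope y) * ENNReal.ofReal (slope y)⁻¹ = 1 := by
        intro y
        rw [ENNReal.ofReal_inv_of_pos (hslope_pos y)]
        exact ENNReal.mul_inv_cancel (ENNReal.ofReal_pos.mpr (hslope_pos y)).ne'
          ENNReal.ofReal_ne_top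
      have hcoordmap : ∀ y : P,
          volume.restrict (ρ y) = ENNReal.ofReal (slope y) • ((unif).map (σ y)) := by
        intro y
        have hmap := map_affine_uniform (hslope_pos y) (⇑(σ y)) (hcoe y)
        rw [hmap, smul_smul, hone y, one_smul]
        by_cases hyS : y ∈ S b
        · rw [hρS y hyS]
          simp only [if_pos hyS, zero_add, hslopeS y hyS]
        · rw [hρnS y hyS]
          simp only [if_neg hyS, hslopenS y hyS]
          rw [show t + (1 - t) = 1 by ring]
          exact Measure.restrict_congr_set Ioc_ae_eq_Icc
      haveI hfin : ∀ y : P, IsFiniteMeasure ((unif).map (σ y)) := fun y =>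
        ⟨by rw [MeasurableEquiv.map_apply]; exact measure_lt_top _ _⟩
      have hpi1 : Measure.pi (fun y : P => volume.restrict (ρ y)) =
          (∏ y : P, ENNReal.ofReal (slope y)) •
            Measure.pi (fun y : P => (unif).map (σ y)) := by
        rw [congrArg Measure.pi (funext hcoordmap)]
        exact pi_smul_eq (fun y => ENNReal.ofReal (slope y))
          (fun y => ENNReal.ofReal_ne_top) (fun y => (unif).map (σ y))
      have hpi2 : Measure.pi (fun y : P => (unif).map (σ y)) =
          μP.map (MeasurableEquiv.piCongrRight σ) := by
        rw [hμP]
        exact (pi_map_piCongrRight (fun _ : P => unif) σ).symm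
      have hGmap : (μP.map (MeasurableEquiv.piCongrRight σ)) (G b) = μP (G b) := by
        rw [MeasurableEquiv.map_apply]
        refine measure_congr ?_
        rw [Filter.eventuallyEq_set]
        filter_upwards [hinj_ae] with w hw
        show (MeasurableEquiv.piCongrRight σ) w ∈ G b ↔ w ∈ G b
        have happ : ((MeasurableEquiv.piCongrRight σ) w : P → ℝ) = fun y => σ y (w y) := rfl
        rw [happ]
        show IsGreedyMaxOn (fun y => σ y (w y)) (S b) x ↔ IsGreedyMaxOn w (S b) x
        have e1 : IsGreedyMaxOn (fun y => σ y (w y)) (S b) x ↔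
            IsGreedyMaxOn (fun y => t * w y) (S b) x := by
          refine isGreedyMaxOn_congr (fun y hy => ?_) x
          rw [hσ_apply y (w y), if_pos hy, hslopeS y hy, zero_add]
        have e2 : IsGreedyMaxOn (fun y => t * w y) (S b) x ↔ IsGreedyMaxOn w (S b) x :=
          isGreedyMaxOn_smul (fun a _ c _ hac => hw hac) ht0 x
        exact e1.trans e2
      rw [hpi1, Measure.smul_apply, smul_eq_mul, hpi2, hGmap, hsplit]
      ring
  -- ### assembling everything
  have hNm2 : μP {w : P → ℝ | IsGreedyMaxOn w Set.univ x ∧ w x ≤ t} =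
      ENNReal.ofReal t * ∑ b : K → Bool, μP (G b) * πB {b} := by
    rw [hNm]
    rw [Finset.mul_sum]
    refine Finset.sum_congr rfl fun b _ => ?_
    rw [hperb_ae b, hperb b, hπB_singleton b]
    ring
  show (μP.prod πB) {ω : (P → ℝ) × (K → Bool) | IsGreedyMaxOn ω.1 (S ω.2) x} =
      μP {w : P → ℝ | IsGreedyMaxOn w Set.univ x ∧ w x ≤ t} / μP {w : P → ℝ | w x ≤ t}
  rw [hLHS, hNm2, hCx]
  exact (ENNReal.eq_div_iff (ENNReal.ofReal_pos.mpr ht0).ne' ENNReal.ofReal_ne_top).mpr rfl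




/-- For a maximal element `x` and `0 < t ≤ 1`, if every other element is
kept independently with probability `t` and the weights are independent uniform on `[0,1]`,
then the probability that `x` is the greedy maximum of the induced partial order on the kept
elements (together with `x`) equals `μ_t(x)`. -/
theorem greedy_max_thinned_eq_muCond (P : Type) [Fintype P] [PartialOrder P] [Nonempty P]
    (x : P) (hx : IsMax x) {t : ℝ} (ht0 : 0 < t) (ht1 : t ≤ 1) :
    ((Measure.pi fun _ : P => volume.restrict (Set.Icc (0:ℝ) 1)).prod
        (Measure.pi fun _ : {y : P // y ≠ x} =>
          (PMF.bernoulli (Real.toNNReal t)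
            (by simpa using Real.toNNReal_le_one.mpr ht1)).toMeasure))
      {ω : (P → ℝ) × ({y : P // y ≠ x} → Bool) |
        IsGreedyMaxOn ω.1 {y | y = x ∨ ∃ h : y ≠ x, ω.2 ⟨y, h⟩ = true} x} =
      muGreedyCond P t x := by
  have h1 : ∀ pf : Real.toNNReal t ≤ 1,
      (PMF.bernoulli (Real.toNNReal t) pf).toMeasure {true} = ENNReal.ofReal t := by
    intro pf
    rw [PMF.toMeasure_apply_singleton _ _ (measurableSet_singleton _)]
    rfl
  have h2 : ∀ pf : Real.toNNReal t ≤ 1,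
      (PMF.bernoulli (Real.toNNReal t) pf).toMeasure {false} = 1 - ENNReal.ofReal t := by
    intro pf
    rw [PMF.toMeasure_apply_singleton _ _ (measurableSet_singleton _)]
    rfl
  unfold muGreedyCond
  exact main_thinned P x hx ht0 ht1 _ (h1 _) (h2 _)
end Main
end
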